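/- Let R be a preorder on A with asymmetric part F = P_R, let E_F^(t) be the transitive closure of the incomparability relation of F, and let A' = A / E_F^(t). Then the weak factor-relation R' on A' (defined by x̄ R' ȳ iff for every x' ∈ x̄ there exists y' ∈ ȳ with x'Ry') is a linear order (reflexive, transitive, antisymmetric, complete). -/

import Mathlib

theorem weak_factor_relation_linear_order {A : Type*} (R : A → A → Prop)
    (hrefl : ∀ x, R x x)
    (htrans : ∀ x y z, R x y → R y z → R x z)
    (s : Setoid A)
    (hs : ∀ a b, s.r a b ↔ Relation.TransGen
      (fun x y => ¬ (R x y ∧ ¬ R y x) ∧ ¬ (R y x ∧ ¬ R x y)) a b) :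
    (let R' : Quotient s → Quotient s → Prop := fun a b =>
      ∀ x', Quotient.mk s x' = a → ∃ y', Quotient.mk s y' = b ∧ R x' y'
     (∀ a, R' a a) ∧
     (∀ a b c, R' a b → R' b c → R' a c) ∧
     (∀ a b, R' a b → R' b a → a = b) ∧
     (∀ a b, R' a b ∨ R' b a)) := by
  -- E a b is the incomparability relation of F, where F x y := R x y ∧ ¬ R y x
  have Esr : ∀ a b, (¬ (R a b ∧ ¬ R b a) ∧ ¬ (R b a ∧ ¬ R a b)) → s.r a b :=
    fun a b h => (hs a b).mpr (Relation.TransGen.single h)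
  have Ftrans : ∀ x y z, (R x y ∧ ¬ R y x) → (R y z ∧ ¬ R z y) → (R x z ∧ ¬ R z x) := by
    rintro x y z ⟨h1, h2⟩ ⟨h3, h4⟩
    exact ⟨htrans _ _ _ h1 h3, fun h5 => h2 (htrans _ _ _ h3 h5)⟩
  -- single-step lemmas
  have S1 : ∀ x x' y, (¬ (R x x' ∧ ¬ R x' x) ∧ ¬ (R x' x ∧ ¬ R x x')) →
      (R x y ∧ ¬ R y x) →
      (R x' y ∧ ¬ R y x') ∨ (¬ (R x' y ∧ ¬ R y x') ∧ ¬ (R y x' ∧ ¬ R x' y)) := by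
    intro x x' y hE hF
    by_cases h1 : R x' y ∧ ¬ R y x'
    · exact Or.inl h1
    · by_cases h2 : R y x' ∧ ¬ R x' y
      · exact absurd (Ftrans _ _ _ hF h2) hE.1
      · exact Or.inr ⟨h1, h2⟩
  have S2 : ∀ x y y', (¬ (R y y' ∧ ¬ R y' y) ∧ ¬ (R y' y ∧ ¬ R y y')) →
      (R x y ∧ ¬ R y x) →
      (R x y' ∧ ¬ R y' x) ∨ (¬ (R x y' ∧ ¬ R y' x) ∧ ¬ (R y' x ∧ ¬ R x y')) := by
    intro x y y' hE hF
    by_cases h1 : R x y' ∧ ¬ R y' x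
    · exact Or.inl h1
    · by_cases h2 : R y' x ∧ ¬ R x y'
      · exact absurd (Ftrans _ _ _ h2 hF) hE.2
      · exact Or.inr ⟨h1, h2⟩
  -- chain lemmas
  have M1 : ∀ x x' y, s.r x x' → (R x y ∧ ¬ R y x) →
      (R x' y ∧ ¬ R y x') ∨ s.r x' y := by
    intro x x' y h
    have h' := (hs _ _).mp h
    induction h' using Relation.TransGen.head_induction_on with
    | single hab =>
      intro hxy
      rcases S1 _ _ _ hab hxy with h1 | h1
      · exact Or.inl h1
      · exact Or.inr (Esr _ _ h1)
    | head hac hcb IH =>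
      intro hxy
      rcases S1 _ _ _ hac hxy with h1 | h1
      · exact IH ((hs _ _).mpr hcb) h1
      · exact Or.inr (s.iseqv.trans (s.iseqv.symm ((hs _ _).mpr hcb)) (Esr _ _ h1))
  have M2 : ∀ x y y', s.r y y' → (R x y ∧ ¬ R y x) →
      (R x y' ∧ ¬ R y' x) ∨ s.r x y' := by
    intro x y y' h
    have h' := (hs _ _).mp h
    induction h' using Relation.TransGen.head_induction_on with
    | single hab =>
      intro hxy
      rcases S2 _ _ _ hab hxy with h1 | h1
      · exact Or.inl h1
      · exact Or.inr (Esr _ _ h1)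
    | head hac hcb IH =>
      intro hxy
      rcases S2 _ _ _ hac hxy with h1 | h1
      · exact IH ((hs _ _).mpr hcb) h1
      · exact Or.inr (s.iseqv.trans (Esr _ _ h1) ((hs _ _).mpr hcb))
  -- comparability between distinct classes
  have comp : ∀ x y, ¬ s.r x y → (R x y ∧ ¬ R y x) ∨ (R y x ∧ ¬ R x y) := by
    intro x y h
    by_cases h1 : R x y ∧ ¬ R y x
    · exact Or.inl h1
    · by_cases h2 : R y x ∧ ¬ R x y
      · exact Or.inr h2
      · exact absurd (Esr _ _ ⟨h1, h2⟩) h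
  intro R'
  refine ⟨?_, ?_, ?_, ?_⟩
  · intro a x' hx'
    exact ⟨x', hx', hrefl x'⟩
  · intro a b c hab hbc x' hx'
    obtain ⟨y', hy', hxy⟩ := hab x' hx'
    obtain ⟨z', hz', hyz⟩ := hbc y' hy'
    exact ⟨z', hz', htrans _ _ _ hxy hyz⟩
  · intro a b hab hba
    obtain ⟨x, hx⟩ := Quotient.exists_rep a
    obtain ⟨y, hy, hxy⟩ := hab x hx
    obtain ⟨x', hx', hyx⟩ := hba y hy
    by_cases hsxy : s.r x y
    · rw [← hx, ← hy]; exact Quotient.sound hsxy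
    · exfalso
      have hxx' : s.r x x' := Quotient.exact (hx.trans hx'.symm)
      have hFxy : R x y ∧ ¬ R y x :=
        ⟨hxy, fun h => hsxy (Esr _ _ ⟨fun hc => hc.2 h, fun hc => hc.2 hxy⟩)⟩
      have hsyx' : ¬ s.r y x' := fun h =>
        hsxy (s.iseqv.symm (s.iseqv.trans h (s.iseqv.symm hxx')))
      have hFyx' : R y x' ∧ ¬ R x' y :=
        ⟨hyx, fun h => hsyx' (Esr _ _ ⟨fun hc => hc.2 h, fun hc => hc.2 hyx⟩)⟩
      rcases M2 y x' x (s.iseqv.symm hxx') hFyx' with h1 | h1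
      · exact h1.2 hFxy.1
      · exact hsxy (s.iseqv.symm h1)
  · intro a b
    obtain ⟨x, hx⟩ := Quotient.exists_rep a
    obtain ⟨y, hy⟩ := Quotient.exists_rep b
    by_cases hsxy : s.r x y
    · have hab : a = b := by rw [← hx, ← hy]; exact Quotient.sound hsxy
      left
      intro x' hx'
      exact ⟨x', hab ▸ hx', hrefl x'⟩
    · rcases comp x y hsxy with hF | hF
      · left
        intro x' hx'
        have hxx' : s.r x x' := Quotient.exact (hx.trans hx'.symm)
        rcases M1 x x' y hxx' hF with h1 | h1
        · exact ⟨y, hy, h1.1⟩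
        · exact absurd (s.iseqv.trans hxx' h1) hsxy
      · right
        intro y' hy'
        have hyy' : s.r y y' := Quotient.exact (hy.trans hy'.symm)
        have hsyx : ¬ s.r y x := fun h => hsxy (s.iseqv.symm h)
        rcases M1 y y' x hyy' hF with h1 | h1
        · exact ⟨x, hx, h1.1⟩
        · exact absurd (s.iseqv.trans hyy' h1) hsyx
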